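/- If a = b = c = 0 and 0 < d ≤ 1, then for any initial point (x,y,z) ∈ S² with x > 0, the iterates V^n(x,y,z) converge to (1-z, 0, z). -/

import Mathlib

open Filter Topology

noncomputable def V (a b c d : ℝ) (p : ℝ × ℝ × ℝ) : ℝ × ℝ × ℝ :=
  (p.1 * (1 - b + d * p.2.1),
   p.2.1 * (1 - a - d * p.1 + c * p.2.2),
   p.2.2 * (1 - c * p.2.1) + a * p.2.1 + b * p.1)

def S2 : Set (ℝ × ℝ × ℝ) :=
  {p | 0 ≤ p.1 ∧ 0 ≤ p.2.1 ∧ 0 ≤ p.2.2 ∧ p.1 + p.2.1 + p.2.2 = 1}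
theorem stmt6 (d : ℝ) (hd0 : 0 < d) (hd1 : d ≤ 1) (p : ℝ × ℝ × ℝ) (hp : p ∈ S2)
    (hx : 0 < p.1) :
    Tendsto (fun n => (V 0 0 0 d)^[n] p) atTop (𝓝 (1 - p.2.2, 0, p.2.2)) := by
  obtain ⟨hx0, hy0, hz0, hsum⟩ := hp
  set x0 := p.1 with hx0def
  set y0 := p.2.1 with hy0def
  set z := p.2.2 with hzdef
  have key : ∀ n, ((V 0 0 0 d)^[n] p).2.2 = z ∧
      ((V 0 0 0 d)^[n] p).1 + ((V 0 0 0 d)^[n] p).2.1 = x0 + y0 ∧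
      0 ≤ ((V 0 0 0 d)^[n] p).2.1 ∧
      x0 ≤ ((V 0 0 0 d)^[n] p).1 ∧
      ((V 0 0 0 d)^[n] p).2.1 ≤ y0 * (1 - d * x0) ^ n := by
    intro n
    induction n with
    | zero => exact ⟨rfl, rfl, hy0, le_refl _, by simp [hy0def]⟩
    | succ n ih =>
      obtain ⟨h1, h2, h3, h4, h5⟩ := ih
      rw [Function.iterate_succ_apply']
      set q := (V 0 0 0 d)^[n] p with hq
      have hq1 : 0 < q.1 := lt_of_lt_of_le hx h4
      have hle1 : q.1 ≤ 1 := by nlinarith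
      have hdx : d * q.1 ≤ 1 := by nlinarith
      have hdx0 : d * x0 ≤ 1 := by nlinarith
      refine ⟨by simp [V, h1], ?_, ?_, ?_, ?_⟩
      · simp only [V]; ring_nf; linarith [h2]
      · simp only [V]
        have : (0:ℝ) ≤ 1 - 0 - d * q.1 + 0 * q.2.2 := by nlinarith
        positivity
      · simp only [V]
        nlinarith [mul_nonneg (le_of_lt hq1) (mul_nonneg hd0.le h3)]
      · simp only [V]
        have hstep : q.2.1 * (1 - 0 - d * q.1 + 0 * q.2.2) ≤ q.2.1 * (1 - d * x0) := by
          have : d * x0 ≤ d * q.1 := by nlinarith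
          nlinarith
        calc q.2.1 * (1 - 0 - d * q.1 + 0 * q.2.2) ≤ q.2.1 * (1 - d * x0) := hstep
          _ ≤ (y0 * (1 - d * x0) ^ n) * (1 - d * x0) := by nlinarith
          _ = y0 * (1 - d * x0) ^ (n + 1) := by ring
  have hr0 : 0 ≤ 1 - d * x0 := by nlinarith
  have hr1 : 1 - d * x0 < 1 := by nlinarith
  have hgeo : Tendsto (fun n : ℕ => y0 * (1 - d * x0) ^ n) atTop (𝓝 0) := by
    have := tendsto_pow_atTop_nhds_zero_of_lt_one hr0 hr1
    simpa using this.const_mul y0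
  have hy : Tendsto (fun n => ((V 0 0 0 d)^[n] p).2.1) atTop (𝓝 0) :=
    squeeze_zero (fun n => (key n).2.2.1) (fun n => (key n).2.2.2.2) hgeo
  have hX : Tendsto (fun n => ((V 0 0 0 d)^[n] p).1) atTop (𝓝 (1 - z)) := by
    have : (fun n => ((V 0 0 0 d)^[n] p).1)
        = fun n => (x0 + y0) - ((V 0 0 0 d)^[n] p).2.1 := by
      funext n; linarith [(key n).2.1]
    rw [this]
    have : Tendsto (fun n => (x0 + y0) - ((V 0 0 0 d)^[n] p).2.1) atTop
        (𝓝 ((x0 + y0) - 0)) := (tendsto_const_nhds).sub hy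
    simpa [show x0 + y0 = 1 - z by linarith] using this
  have hZ : Tendsto (fun n => ((V 0 0 0 d)^[n] p).2.2) atTop (𝓝 z) := by
    simp only [fun n => (key n).1]; exact tendsto_const_nhds
  exact hX.prodMk_nhds (hy.prodMk_nhds hZ)
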